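/- For all a, b > 0 with a ≠ b, N₃(a,b) - L(a,b) ≤ (5/2)·(N₁(a,b) - L(a,b)), where N₃(a,b) = (a + √(ab) + b)/3, N₁(a,b) = ((√a + √b)/2)², and L is the logarithmic mean. -/

import Mathlib

open Real Set

lemma pade_deriv (x : ℝ) (hx : 0 < x) (hd : x ^ 2 + 4 * x + 1 ≠ 0) :
    HasDerivAt (fun y : ℝ => Real.log y - 3 * (y ^ 2 - 1) / (y ^ 2 + 4 * y + 1))
      ((x - 1) ^ 4 / (x * (x ^ 2 + 4 * x + 1) ^ 2)) x := by
  have hlog : HasDerivAt Real.log x⁻¹ x := Real.hasDerivAt_log (ne_of_gt hx)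
  have hnum : HasDerivAt (fun y : ℝ => 3 * (y ^ 2 - 1)) (3 * (2 * x)) x := by
    simpa using (((hasDerivAt_pow 2 x).sub_const 1).const_mul 3)
  have hden : HasDerivAt (fun y : ℝ => y ^ 2 + 4 * y + 1) (2 * x + 4) x := by
    have h1 : HasDerivAt (fun y : ℝ => y ^ 2) (2 * x) x := by
      simpa using hasDerivAt_pow 2 x
    have h2 : HasDerivAt (fun y : ℝ => 4 * y) 4 x := by
      simpa using (hasDerivAt_id x).const_mul 4
    simpa using (h1.add h2).add_const 1
  have hq := hnum.div hden hd
  have h := hlog.sub hq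
  refine h.congr_deriv ?_
  field_simp
  ring

lemma pade_log (t : ℝ) (ht : 1 < t) :
    3 * (t ^ 2 - 1) ≤ (t ^ 2 + 4 * t + 1) * Real.log t := by
  set g : ℝ → ℝ := fun y => Real.log y - 3 * (y ^ 2 - 1) / (y ^ 2 + 4 * y + 1) with hg
  have hpos : ∀ x : ℝ, 1 ≤ x → 0 < x ^ 2 + 4 * x + 1 := by intro x hx; nlinarith
  have hcont : ContinuousOn g (Set.Ici (1 : ℝ)) := by
    intro x hx
    have hx1 : (1 : ℝ) ≤ x := hx
    exact ((pade_deriv x (by linarith) (ne_of_gt (hpos x hx1))).continuousAt).continuousWithinAt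
  have hmono : StrictMonoOn g (Set.Ici (1 : ℝ)) := by
    apply StrictMonoOn.mono (s := Set.Ici (1:ℝ)) ?_ le_rfl
    apply strictMonoOn_of_deriv_pos (convex_Ici 1) hcont
    intro x hx
    rw [interior_Ici] at hx
    have hx1 : (1 : ℝ) < x := hx
    have hx0 : (0 : ℝ) < x := by linarith
    have hdne := ne_of_gt (hpos x hx1.le)
    rw [(pade_deriv x hx0 hdne).deriv]
    exact div_pos (pow_pos (by linarith) 4) (by positivity)
  have h0 : g 1 = 0 := by simp [hg]
  have h1 : g 1 < g t := hmono Set.self_mem_Ici (Set.mem_Ici.mpr ht.le) ht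
  rw [h0] at h1
  have hdpos := hpos t ht.le
  have : 3 * (t ^ 2 - 1) / (t ^ 2 + 4 * t + 1) < Real.log t := by
    simpa [hg] using h1
  calc 3 * (t ^ 2 - 1) = 3 * (t ^ 2 - 1) / (t ^ 2 + 4 * t + 1) * (t ^ 2 + 4 * t + 1) := by
        field_simp
    _ ≤ Real.log t * (t ^ 2 + 4 * t + 1) := by
        apply mul_le_mul_of_nonneg_right this.le hdpos.le
    _ = (t ^ 2 + 4 * t + 1) * Real.log t := by ring

lemma main_aux (a b : ℝ) (ha : 0 < a) (hab : a < b) :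
    (a + Real.sqrt (a * b) + b) / 3 - (b - a) / (Real.log b - Real.log a) ≤
      (5 / 2) * (((Real.sqrt a + Real.sqrt b) / 2) ^ 2 -
        (b - a) / (Real.log b - Real.log a)) := by
  have hb : 0 < b := lt_trans ha hab
  set sa := Real.sqrt a with hsa
  set sb := Real.sqrt b with hsb
  have hsa0 : 0 < sa := Real.sqrt_pos.mpr ha
  have hsb0 : 0 < sb := Real.sqrt_pos.mpr hb
  have hsa2 : sa ^ 2 = a := Real.sq_sqrt ha.le
  have hsb2 : sb ^ 2 = b := Real.sq_sqrt hb.le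
  have hG : Real.sqrt (a * b) = sa * sb := Real.sqrt_mul ha.le b
  have hsalt : sa < sb := Real.sqrt_lt_sqrt ha.le hab
  have hD : 0 < Real.log b - Real.log a := by
    have := Real.log_lt_log ha hab
    linarith
  -- apply pade_log with t = sb / sa
  have ht : 1 < sb / sa := (one_lt_div hsa0).mpr hsalt
  have hp := pade_log (sb / sa) ht
  have hlogt : Real.log (sb / sa) = (Real.log b - Real.log a) / 2 := by
    rw [Real.log_div (ne_of_gt hsb0) (ne_of_gt hsa0), hsa, hsb,
      Real.log_sqrt ha.le, Real.log_sqrt hb.le]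
    ring
  rw [hlogt] at hp
  have hkey : 6 * (b - a) ≤ (a + b + 4 * (sa * sb)) * (Real.log b - Real.log a) := by
    have h2 : ((sb / sa) ^ 2 - 1) = (b - a) / a := by
      rw [div_pow, hsa2, hsb2]; field_simp
    have h3 : (sb / sa) ^ 2 + 4 * (sb / sa) + 1 = (b + 4 * (sa * sb) + a) / a := by
      rw [div_pow, hsa2, hsb2]
      rw [← hsa2]
      field_simp
    rw [h2, h3] at hp
    rw [mul_div_assoc', div_mul_div_comm, div_le_div_iff₀ ha (by positivity)] at hp
    nlinarith [hp, ha]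
  have hL : (b - a) / (Real.log b - Real.log a) ≤ (a + b + 4 * (sa * sb)) / 6 := by
    rw [div_le_div_iff₀ hD (by norm_num : (0:ℝ) < 6)]
    linarith [hkey]
  rw [hG]
  nlinarith [hL, sq_nonneg (sa - sb), hsa2, hsb2, mul_pos hsa0 hsb0]

theorem MN3L_le_MN1L (a b : ℝ) (ha : 0 < a) (hb : 0 < b) (hab : a ≠ b) :
    (a + Real.sqrt (a * b) + b) / 3 - (b - a) / (Real.log b - Real.log a) ≤
      (5 / 2) * (((Real.sqrt a + Real.sqrt b) / 2) ^ 2 -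
        (b - a) / (Real.log b - Real.log a)) := by
  rcases lt_or_gt_of_ne hab with h | h
  · exact main_aux a b ha h
  · have := main_aux b a hb h
    have e1 : Real.sqrt (b * a) = Real.sqrt (a * b) := by rw [mul_comm]
    have e2 : (a - b) / (Real.log a - Real.log b) = (b - a) / (Real.log b - Real.log a) := by
      rw [← neg_div_neg_eq]; ring_nf
    rw [e1, e2] at this
    calc (a + Real.sqrt (a * b) + b) / 3 - (b - a) / (Real.log b - Real.log a)
        = (b + Real.sqrt (a * b) + a) / 3 - (b - a) / (Real.log b - Real.log a) := by ring
      _ ≤ (5 / 2) * (((Real.sqrt b + Real.sqrt a) / 2) ^ 2 -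
            (b - a) / (Real.log b - Real.log a)) := this
      _ = (5 / 2) * (((Real.sqrt a + Real.sqrt b) / 2) ^ 2 -
            (b - a) / (Real.log b - Real.log a)) := by ring
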